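/- Let Λ be a cofinal rank-r graph and V a Λ-contraction on a complex Hilbert space H. Let X ∈ B(H) and suppose that for every j ∈ {1,…,r} and every ξ ∈ H the family (V_λ X V_λ* ξ)_{λ∈Λ^{e_j}} is summable with sum X ξ. Then for every n ∈ ℕ^r and every ξ ∈ H the family (V_λ X V_λ* ξ)_{λ∈Λ^n} is summable with sum X ξ; in particular Σ_{a∈Λ⁰} V_a X V_a = X strongly. -/

import Mathlib

open scoped ComplexOrder
open ContinuousLinearMap

set_option synthInstance.maxHeartbeats 1000000
set_option maxHeartbeats 1000000

noncomputable section

universe u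

/-- A rank-`r` graph: a countable small category whose morphisms form `Λ`, objects being
identified with degree-zero morphisms, equipped with a degree functor into `ℕ^r`
satisfying the unique factorisation property. -/
structure KGraph (r : ℕ) where
  Λ : Type
  countable : Countable Λ
  src : Λ → Λ
  tgt : Λ → Λ
  deg : Λ → Fin r → ℕ
  comp : Λ → Λ → Λ
  deg_src : ∀ l, deg (src l) = 0
  deg_tgt : ∀ l, deg (tgt l) = 0
  src_eq_self : ∀ l, deg l = 0 → src l = l
  tgt_eq_self : ∀ l, deg l = 0 → tgt l = l
  comp_src_self : ∀ l, comp l (src l) = l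
  tgt_comp_self : ∀ l, comp (tgt l) l = l
  src_comp : ∀ l m, src l = tgt m → src (comp l m) = src m
  tgt_comp : ∀ l m, src l = tgt m → tgt (comp l m) = tgt l
  deg_comp : ∀ l m, src l = tgt m → deg (comp l m) = deg l + deg m
  comp_assoc : ∀ l m n, src l = tgt m → src m = tgt n →
    comp (comp l m) n = comp l (comp m n)
  factorisation : ∀ (l : Λ) (m n : Fin r → ℕ), deg l = m + n →
    ∃! p : Λ × Λ, deg p.1 = m ∧ deg p.2 = n ∧ src p.1 = tgt p.2 ∧ comp p.1 p.2 = l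

namespace KGraph

variable {r : ℕ} (K : KGraph r)

/-- `|λ|`, the total degree of a morphism. -/
def degSum (l : K.Λ) : ℕ := ∑ j, K.deg l j

/-- The vertices `Λ⁰`, i.e. the degree-zero morphisms. -/
def IsVertex (l : K.Λ) : Prop := K.deg l = 0

/-- The pairs `(α, β)` describing the elements `μα = νβ` of `MCE(μ, ν)`. -/
def MCEPair (μ ν : K.Λ) (p : K.Λ × K.Λ) : Prop :=
  K.src μ = K.tgt p.1 ∧ K.src ν = K.tgt p.2 ∧ K.comp μ p.1 = K.comp ν p.2 ∧
    K.deg (K.comp μ p.1) = K.deg μ ⊔ K.deg ν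

/-- `Λ` is finitely aligned. -/
def FinitelyAligned : Prop := ∀ μ ν : K.Λ, {p : K.Λ × K.Λ | K.MCEPair μ ν p}.Finite

/-- `Λ` is row-finite. -/
def RowFinite : Prop :=
  ∀ (n : Fin r → ℕ) (a : K.Λ), {l : K.Λ | K.deg l = n ∧ K.tgt l = a}.Finite

/-- `Λ` is a finite graph: each `Λ^n` is finite. -/
def FiniteGraph : Prop := ∀ n : Fin r → ℕ, {l : K.Λ | K.deg l = n}.Finite

/-- `Λ` has no sources. -/
def NoSources : Prop :=
  ∀ a : K.Λ, K.IsVertex a → ∀ n : Fin r → ℕ, ∃ l, K.deg l = n ∧ K.tgt l = a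

/-- `Λ` is cofinal. -/
def Cofinal : Prop := ∀ a : K.Λ, K.IsVertex a → ∃ l, K.deg l ≠ 0 ∧ K.tgt l = a

end KGraph

section Families

variable {r : ℕ} (K : KGraph r)
variable {H : Type u} [NormedAddCommGroup H] [InnerProductSpace ℂ H] [CompleteSpace H]

/-- A `Λ`-contraction on a Hilbert space `H`. -/
def IsLambdaContraction (V : K.Λ → H →L[ℂ] H) : Prop :=
  (∀ l m, K.src l ≠ K.tgt m → V l ∘L V m = 0) ∧
  (∀ l m, K.src l = K.tgt m → V l ∘L V m = V (K.comp l m)) ∧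
  (∀ (n : Fin r → ℕ) (F : Finset K.Λ), (∀ l ∈ F, K.deg l = n) →
    ((1 : H →L[ℂ] H) - ∑ l ∈ F, V l ∘L adjoint (V l)).IsPositive) ∧
  (∀ a, K.IsVertex a → IsSelfAdjoint (V a) ∧ V a ∘L V a = V a) ∧
  (∀ ξ : H, HasSum (fun a : {a : K.Λ // K.IsVertex a} => V a.1 ξ) ξ)

/-- A `Λ`-isometry on a Hilbert space `H`. -/
def IsLambdaIsometry (V : K.Λ → H →L[ℂ] H) : Prop :=
  IsLambdaContraction K V ∧
  ∀ (n : Fin r → ℕ) (ξ : H),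
    HasSum (fun l : {l : K.Λ // K.deg l = n} => V l.1 (adjoint (V l.1) ξ)) ξ

/-- `D` is the defect operator `Δ_s(V)` (a strong-operator-topology sum). -/
def IsDefectOperator (V : K.Λ → H →L[ℂ] H) (s : ℝ) (D : H →L[ℂ] H) : Prop :=
  ∀ ξ : H, HasSum
    (fun m : {m : K.Λ // K.deg m ≤ 1} =>
      (((-(s ^ 2)) ^ K.degSum m.1 : ℝ) : ℂ) • V m.1 (adjoint (V m.1) ξ)) (D ξ)

/-- The Popescu condition for a `Λ`-contraction. -/
def PopescuCondition (V : K.Λ → H →L[ℂ] H) : Prop :=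
  ∃ ρ ∈ Set.Ioo (0 : ℝ) 1, ∀ s ∈ Set.Ioo ρ 1,
    ∃ D : H →L[ℂ] H, IsDefectOperator K V s D ∧ D.IsPositive

/-- A Toeplitz-Cuntz-Krieger `Λ`-family. -/
def IsTCKFamily (W : K.Λ → H →L[ℂ] H) : Prop :=
  (∀ l, W l ∘L adjoint (W l) ∘L W l = W l) ∧
  (∀ a, K.IsVertex a → IsSelfAdjoint (W a) ∧ W a ∘L W a = W a) ∧
  (∀ a b, K.IsVertex a → K.IsVertex b → a ≠ b → W a ∘L W b = 0) ∧
  (∀ l m, K.src l = K.tgt m → W l ∘L W m = W (K.comp l m)) ∧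
  (∀ l, adjoint (W l) ∘L W l = W (K.src l)) ∧
  (∀ n : Fin r → ℕ, n ≠ 0 → ∀ a, K.IsVertex a → ∀ F : Finset K.Λ,
    (∀ l ∈ F, K.deg l = n ∧ K.tgt l = a) →
    (W a - ∑ l ∈ F, W l ∘L adjoint (W l)).IsPositive) ∧
  (∀ μ ν : K.Λ, ∀ ξ : H,
    HasSum (fun p : {p : K.Λ × K.Λ // K.MCEPair μ ν p} => W p.1.1 (adjoint (W p.1.2) ξ))
      (adjoint (W μ) (W ν ξ)))

/-- A Cuntz-Pimsner `Λ`-family. -/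
def IsCPFamily (W : K.Λ → H →L[ℂ] H) : Prop :=
  IsTCKFamily K W ∧
  ∀ n : Fin r → ℕ, n ≠ 0 → ∀ a, K.IsVertex a → ∀ ξ : H,
    HasSum (fun l : {l : K.Λ // K.deg l = n ∧ K.tgt l = a} => W l.1 (adjoint (W l.1) ξ))
      (W a ξ)

end Families

section Creation

variable {r : ℕ}

/-- The Fock space `ℓ²(Λ)` of a higher-rank graph. -/
abbrev FockSpace (K : KGraph r) : Type := lp (fun _ : K.Λ => ℂ) 2

/-- `L` is the family of creation operators on `ℓ²(Λ)`:
`L_λ δ_μ = δ_{λμ}` if `s(λ) = r(μ)` and `L_λ δ_μ = 0` otherwise. -/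
def IsCreationFamily (K : KGraph r) [DecidableEq K.Λ]
    (L : K.Λ → FockSpace K →L[ℂ] FockSpace K) : Prop :=
  ∀ l m : K.Λ,
    (K.src l = K.tgt m → L l (lp.single 2 m 1) = lp.single 2 (K.comp l m) 1) ∧
    (K.src l ≠ K.tgt m → L l (lp.single 2 m 1) = 0)

end Creation


/-! ### Auxiliary lemmas for Statement 10 -/

section AuxHilbert

set_option linter.unusedSectionVars false

variable {H : Type u} [NormedAddCommGroup H] [InnerProductSpace ℂ H] [CompleteSpace H]

local notation "⟪" x ", " y "⟫" => @inner ℂ _ _ x y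

private lemma abs_re_inner_le_opNorm (Y : H →L[ℂ] H) (x : H) :
    |RCLike.re ⟪Y x, x⟫| ≤ ‖Y‖ * ‖x‖ ^ 2 := by
  calc |RCLike.re ⟪Y x, x⟫| ≤ ‖⟪Y x, x⟫‖ := RCLike.abs_re_le_norm _
    _ ≤ ‖Y x‖ * ‖x‖ := norm_inner_le_norm _ _
    _ ≤ (‖Y‖ * ‖x‖) * ‖x‖ := by
        have := Y.le_opNorm x
        nlinarith [norm_nonneg x]
    _ = ‖Y‖ * ‖x‖ ^ 2 := by ring

private lemma shifted_isPositive (Y : H →L[ℂ] H) (hY : IsSelfAdjoint Y) :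
    (((‖Y‖ : ℂ) • (1 : H →L[ℂ] H) + Y).IsPositive) ∧
    (((‖Y‖ : ℂ) • (1 : H →L[ℂ] H) - Y).IsPositive) := by
  have hsa1 : IsSelfAdjoint ((‖Y‖ : ℂ) • (1 : H →L[ℂ] H)) := by
    rw [IsSelfAdjoint, star_smul, star_one, Complex.star_def, Complex.conj_ofReal]
  have hre : ∀ x : H, RCLike.re ⟪((‖Y‖ : ℂ) • (1 : H →L[ℂ] H)) x, x⟫ = ‖Y‖ * ‖x‖ ^ 2 := by
    intro x
    rw [ContinuousLinearMap.smul_apply, ContinuousLinearMap.one_apply, inner_smul_left]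
    simp only [RCLike.conj_ofReal, Complex.conj_ofReal]
    rw [RCLike.re_to_complex, Complex.mul_re, Complex.ofReal_re, Complex.ofReal_im]
    have h1 : (⟪x, x⟫).re = ‖x‖ ^ 2 := by
      rw [← RCLike.re_to_complex]; exact inner_self_eq_norm_sq _
    rw [h1]; ring
  constructor
  · refine isPositive_def'.mpr ⟨hsa1.add hY, fun x => ?_⟩
    rw [reApplyInnerSelf_apply, ContinuousLinearMap.add_apply, inner_add_left, map_add, hre]
    have := abs_re_inner_le_opNorm Y x
    have h2 := neg_abs_le (RCLike.re ⟪Y x, x⟫)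
    linarith
  · refine isPositive_def'.mpr ⟨hsa1.sub hY, fun x => ?_⟩
    rw [reApplyInnerSelf_apply, ContinuousLinearMap.sub_apply, inner_sub_left, map_sub, hre]
    have := abs_re_inner_le_opNorm Y x
    have h2 := le_abs_self (RCLike.re ⟪Y x, x⟫)
    linarith

private lemma decomp_four (X : H →L[ℂ] H) :
    ∃ (Y₁ Y₂ Y₃ Y₄ : H →L[ℂ] H) (c₁ c₂ c₃ c₄ : ℂ), Y₁.IsPositive ∧ Y₂.IsPositive ∧
      Y₃.IsPositive ∧ Y₄.IsPositive ∧
      X = c₁ • Y₁ + c₂ • Y₂ + c₃ • Y₃ + c₄ • Y₄ := by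
  have hAs : IsSelfAdjoint (X + adjoint X) := by
    rw [IsSelfAdjoint, star_add, star_eq_adjoint, star_eq_adjoint, adjoint_adjoint, add_comm]
  have hBs : IsSelfAdjoint (Complex.I • (adjoint X - X)) := by
    rw [IsSelfAdjoint, star_smul, star_sub, star_eq_adjoint, star_eq_adjoint, adjoint_adjoint,
      Complex.star_def, Complex.conj_I]
    module
  obtain ⟨hA1, hA2⟩ := shifted_isPositive _ hAs
  obtain ⟨hB1, hB2⟩ := shifted_isPositive _ hBs
  refine ⟨_, _, _, _, (1/4 : ℂ), -(1/4 : ℂ), Complex.I/4, -(Complex.I/4),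
    hA1, hA2, hB1, hB2, ?_⟩
  have e1 : ∀ (c : ℂ) (T : H →L[ℂ] H),
      (1/4 : ℂ) • (c • (1 : H →L[ℂ] H) + T) + (-(1/4 : ℂ)) • (c • 1 - T)
        = (1/2 : ℂ) • T := by intros; module
  have e2 : ∀ (c : ℂ) (T : H →L[ℂ] H),
      (Complex.I/4) • (c • (1 : H →L[ℂ] H) + T) + (-(Complex.I/4)) • (c • 1 - T)
        = (Complex.I/2) • T := by intros; module
  rw [add_assoc ((1/4 : ℂ) • _ + _), e1, e2, smul_smul,
    show Complex.I/2 * Complex.I = -(1/2 : ℂ) by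
      rw [div_mul_eq_mul_div, Complex.I_mul_I]; norm_num]
  module

private lemma key_ineq (S : H →L[ℂ] H) (hS : S.IsPositive) {C : ℝ} (hC : 0 ≤ C)
    (hb : ∀ η : H, S.reApplyInnerSelf η ≤ C * ‖η‖ ^ 2) (ξ : H) :
    ‖S ξ‖ ^ 2 ≤ C * S.reApplyInnerSelf ξ := by
  have hexp : ∀ t : ℝ, S.reApplyInnerSelf (ξ + (t : ℂ) • S ξ) = S.reApplyInnerSelf (S ξ) * (t * t)
      + (2 * ‖S ξ‖ ^ 2) * t + S.reApplyInnerSelf ξ := by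
    intro t
    have hSS : ⟪S (S ξ), ξ⟫ = ⟪S ξ, S ξ⟫ := by
      nth_rewrite 1 [← hS.isSelfAdjoint.adjoint_eq]
      exact ContinuousLinearMap.adjoint_inner_left S ξ (S ξ)
    rw [reApplyInnerSelf_apply, reApplyInnerSelf_apply, reApplyInnerSelf_apply,
      map_add, map_smul]
    rw [inner_add_left, inner_add_right, inner_add_right, inner_smul_left,
      inner_smul_right, inner_smul_left, inner_smul_right, hSS]
    simp only [RCLike.re_to_complex, Complex.conj_ofReal, Complex.add_re, Complex.mul_re,
      Complex.ofReal_re, Complex.ofReal_im, zero_mul, sub_zero]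
    have hre : (⟪S ξ, S ξ⟫).re = ‖S ξ‖ ^ 2 := by
      rw [← RCLike.re_to_complex]; exact inner_self_eq_norm_sq _
    rw [hre]
    ring
  set a := S.reApplyInnerSelf ξ with ha
  set b := S.reApplyInnerSelf (S ξ) with hbdef
  set c := ‖S ξ‖ ^ 2 with hc
  have ha0 : 0 ≤ a := hS.2 ξ
  have hb0 : 0 ≤ b := hS.2 (S ξ)
  have hc0 : 0 ≤ c := sq_nonneg _
  have hbC : b ≤ C * c := hb (S ξ)
  have hquad : ∀ t : ℝ, 0 ≤ b * (t * t) + (2 * c) * t + a := by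
    intro t
    have h0 := hS.2 (ξ + (t : ℂ) • S ξ)
    rw [hexp t] at h0
    linarith
  have hdisc := discrim_le_zero hquad
  rw [discrim] at hdisc
  have hcsq : c ^ 2 ≤ b * a := by nlinarith
  rcases eq_or_lt_of_le hc0 with h | h
  · rw [← h]; positivity
  · nlinarith

private lemma summable_apply_of_isPositive {ι : Type*} (T : ι → H →L[ℂ] H)
    (hpos : ∀ i, (T i).IsPositive) {C : ℝ} (hC : 0 ≤ C)
    (hbd : ∀ (F : Finset ι) (η : H), (∑ i ∈ F, T i).reApplyInnerSelf η ≤ C * ‖η‖ ^ 2)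
    (ξ : H) : Summable (fun i => T i ξ) := by
  have hsum_eq : ∀ F : Finset ι, (∑ i ∈ F, T i).reApplyInnerSelf ξ
      = ∑ i ∈ F, (T i).reApplyInnerSelf ξ := by
    intro F
    simp [reApplyInnerSelf_apply, ContinuousLinearMap.sum_apply, sum_inner]
  have hφ : Summable fun i => (T i).reApplyInnerSelf ξ :=
    summable_of_sum_le (fun i => (hpos i).2 ξ)
      (fun F => by rw [← hsum_eq]; exact hbd F ξ)
  rw [summable_iff_vanishing]
  intro e he
  obtain ⟨ε, hε, hball⟩ := Metric.mem_nhds_iff.1 he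
  have hδ : (0:ℝ) < ε ^ 2 / (C + 1) := by positivity
  obtain ⟨s, hs⟩ := summable_iff_vanishing.1 hφ (Metric.ball 0 (ε ^ 2 / (C + 1)))
    (Metric.ball_mem_nhds 0 hδ)
  refine ⟨s, fun t ht => hball ?_⟩
  have hSpos : (∑ i ∈ t, T i).IsPositive :=
    Finset.sum_induction _ _ (fun _ _ => ContinuousLinearMap.IsPositive.add)
      ContinuousLinearMap.isPositive_zero (fun i _ => hpos i)
  have hkey := key_ineq (∑ i ∈ t, T i) hSpos hC (hbd t) ξ
  have h1 : ∑ i ∈ t, (T i).reApplyInnerSelf ξ < ε ^ 2 / (C + 1) := by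
    have := hs t ht
    rw [Metric.mem_ball, Real.dist_eq, sub_zero] at this
    exact lt_of_le_of_lt (le_abs_self _) this
  have h2 : ‖(∑ i ∈ t, T i) ξ‖ ^ 2 < ε ^ 2 := by
    rw [hsum_eq] at hkey
    have hmul : C * ∑ i ∈ t, (T i).reApplyInnerSelf ξ ≤ C * (ε ^ 2 / (C + 1)) :=
      mul_le_mul_of_nonneg_left h1.le hC
    have hlt : C * (ε ^ 2 / (C + 1)) < ε ^ 2 := by
      rw [mul_div_assoc']
      rw [div_lt_iff₀ (by linarith : (0:ℝ) < C + 1)]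
      nlinarith
    calc ‖(∑ i ∈ t, T i) ξ‖ ^ 2 ≤ C * ∑ i ∈ t, (T i).reApplyInnerSelf ξ := hkey
      _ ≤ C * (ε ^ 2 / (C + 1)) := hmul
      _ < ε ^ 2 := hlt
  rw [Metric.mem_ball, dist_zero_right]
  have hsa : ∑ i ∈ t, T i ξ = (∑ i ∈ t, T i) ξ := by
    simp [ContinuousLinearMap.sum_apply]
  rw [hsa]
  exact lt_of_pow_lt_pow_left₀ 2 hε.le h2

end AuxHilbert

section AuxGraph

set_option linter.unusedSectionVars false

variable {r : ℕ} {K : KGraph r}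
variable {H : Type u} [NormedAddCommGroup H] [InnerProductSpace ℂ H] [CompleteSpace H]
variable {V : K.Λ → H →L[ℂ] H}

local notation "⟪" x ", " y "⟫" => @inner ℂ _ _ x y

private lemma reApply_conj (W Y : H →L[ℂ] H) (η : H) :
    (W ∘L Y ∘L adjoint W).reApplyInnerSelf η
      = RCLike.re ⟪Y (adjoint W η), adjoint W η⟫ := by
  rw [reApplyInnerSelf_apply, ContinuousLinearMap.comp_apply, ContinuousLinearMap.comp_apply,
    ← ContinuousLinearMap.adjoint_inner_right W]

private lemma reApply_WW (W : H →L[ℂ] H) (η : H) :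
    (W ∘L adjoint W).reApplyInnerSelf η = ‖adjoint W η‖ ^ 2 := by
  rw [reApplyInnerSelf_apply, ContinuousLinearMap.comp_apply,
    ← ContinuousLinearMap.adjoint_inner_right W]
  exact inner_self_eq_norm_sq _

private lemma pair_injective (n₁ n₂ : Fin r → ℕ) {μ ν μ' ν' : K.Λ}
    (hμ : K.deg μ = n₁) (hν : K.deg ν = n₂) (hμ' : K.deg μ' = n₁) (hν' : K.deg ν' = n₂)
    (hc : K.src μ = K.tgt ν) (hc' : K.src μ' = K.tgt ν')
    (h : K.comp μ ν = K.comp μ' ν') : μ = μ' ∧ ν = ν' := by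
  have hl : K.deg (K.comp μ ν) = n₁ + n₂ := by rw [K.deg_comp _ _ hc, hμ, hν]
  obtain ⟨w, hw, huniq⟩ := K.factorisation (K.comp μ ν) n₁ n₂ hl
  have h1 := huniq (μ, ν) ⟨hμ, hν, hc, rfl⟩
  have h2 := huniq (μ', ν') ⟨hμ', hν', hc', h.symm⟩
  have h3 := h1.trans h2.symm
  exact ⟨congrArg Prod.fst h3, congrArg Prod.snd h3⟩

private lemma sum_WW_bound (hV : IsLambdaContraction K V) (n₁ n₂ : Fin r → ℕ)
    (F : Finset (Σ _ : {l : K.Λ // K.deg l = n₁}, {l : K.Λ // K.deg l = n₂})) (η : H) :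
    (∑ p ∈ F, (V p.1.1 ∘L V p.2.1) ∘L adjoint (V p.1.1 ∘L V p.2.1)).reApplyInnerSelf η
      ≤ ‖η‖ ^ 2 := by
  classical
  obtain ⟨h1, h2, h3, h4, h5⟩ := hV
  set F' := F.filter (fun p => K.src p.1.1 = K.tgt p.2.1) with hF'
  have hinjF : ∀ p ∈ F', ∀ q ∈ F',
      K.comp p.1.1 p.2.1 = K.comp q.1.1 q.2.1 → p = q := by
    intro p hp q hq hpq
    have hcp := (Finset.mem_filter.1 hp).2
    have hcq := (Finset.mem_filter.1 hq).2
    obtain ⟨e1, e2⟩ := pair_injective n₁ n₂ p.1.2 p.2.2 q.1.2 q.2.2 hcp hcq hpq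
    obtain ⟨pa, pb⟩ := p
    obtain ⟨qa, qb⟩ := q
    simp only at e1 e2
    apply Sigma.ext
    · exact Subtype.ext e1
    · exact heq_of_eq (Subtype.ext e2)
  set G := F'.image (fun p => K.comp p.1.1 p.2.1) with hG
  have step1 : ∑ p ∈ F, (V p.1.1 ∘L V p.2.1) ∘L adjoint (V p.1.1 ∘L V p.2.1)
      = ∑ l ∈ G, V l ∘L adjoint (V l) := by
    have himg : ∑ l ∈ G, V l ∘L adjoint (V l)
        = ∑ p ∈ F', (V p.1.1 ∘L V p.2.1) ∘L adjoint (V p.1.1 ∘L V p.2.1) := by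
      rw [hG, Finset.sum_image hinjF]
      refine Finset.sum_congr rfl (fun p hp => ?_)
      rw [← h2 _ _ (Finset.mem_filter.1 hp).2]
    have hfil : ∑ p ∈ F', (V p.1.1 ∘L V p.2.1) ∘L adjoint (V p.1.1 ∘L V p.2.1)
        = ∑ p ∈ F, (V p.1.1 ∘L V p.2.1) ∘L adjoint (V p.1.1 ∘L V p.2.1) := by
      refine Finset.sum_subset (hF' ▸ Finset.filter_subset _ F) (fun p hp hnp => ?_)
      have hnc : K.src p.1.1 ≠ K.tgt p.2.1 := by
        intro hcc
        exact hnp (hF' ▸ Finset.mem_filter.2 ⟨hp, hcc⟩)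
      rw [h1 _ _ hnc]
      simp
    rw [himg, hfil]
  have hGdeg : ∀ l ∈ G, K.deg l = n₁ + n₂ := by
    intro l hl
    rw [hG] at hl
    obtain ⟨p, hp, rfl⟩ := Finset.mem_image.1 hl
    rw [K.deg_comp _ _ (Finset.mem_filter.1 hp).2, p.1.2, p.2.2]
  have hpos := (h3 (n₁ + n₂) G hGdeg).2 η
  rw [step1]
  rw [reApplyInnerSelf_apply, ContinuousLinearMap.sub_apply, ContinuousLinearMap.one_apply,
    inner_sub_left, map_sub] at hpos
  have hnorm : RCLike.re ⟪η, η⟫ = ‖η‖ ^ 2 := inner_self_eq_norm_sq η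
  rw [reApplyInnerSelf_apply]
  linarith

private lemma summable_sigma_family (hV : IsLambdaContraction K V) (X : H →L[ℂ] H)
    (n₁ n₂ : Fin r → ℕ) (ξ : H) :
    Summable (fun q : Σ _ : {l : K.Λ // K.deg l = n₁}, {l : K.Λ // K.deg l = n₂} =>
      V q.1.1 (V q.2.1 (X (adjoint (V q.2.1) (adjoint (V q.1.1) ξ))))) := by
  have hform : ∀ (Y : H →L[ℂ] H)
      (q : Σ _ : {l : K.Λ // K.deg l = n₁}, {l : K.Λ // K.deg l = n₂}),
      V q.1.1 (V q.2.1 (Y (adjoint (V q.2.1) (adjoint (V q.1.1) ξ))))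
        = ((V q.1.1 ∘L V q.2.1) ∘L Y ∘L adjoint (V q.1.1 ∘L V q.2.1)) ξ := by
    intro Y q
    simp [ContinuousLinearMap.comp_apply, ContinuousLinearMap.adjoint_comp]
  have main : ∀ Y : H →L[ℂ] H, Y.IsPositive →
      Summable (fun q : Σ _ : {l : K.Λ // K.deg l = n₁}, {l : K.Λ // K.deg l = n₂} =>
        ((V q.1.1 ∘L V q.2.1) ∘L Y ∘L adjoint (V q.1.1 ∘L V q.2.1)) ξ) := by
    intro Y hY
    refine summable_apply_of_isPositive _ (fun q => hY.conj_adjoint _) (norm_nonneg Y) ?_ ξ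
    intro F η
    have hsplit : ∀ (T : (Σ _ : {l : K.Λ // K.deg l = n₁}, {l : K.Λ // K.deg l = n₂}) →
        (H →L[ℂ] H)),
        (∑ q ∈ F, T q).reApplyInnerSelf η = ∑ q ∈ F, (T q).reApplyInnerSelf η := by
      intro T
      simp [reApplyInnerSelf_apply, ContinuousLinearMap.sum_apply, sum_inner]
    rw [hsplit]
    have hterm : ∀ q : Σ _ : {l : K.Λ // K.deg l = n₁}, {l : K.Λ // K.deg l = n₂},
        ((V q.1.1 ∘L V q.2.1) ∘L Y ∘L adjoint (V q.1.1 ∘L V q.2.1)).reApplyInnerSelf η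
        ≤ ‖Y‖ * ((V q.1.1 ∘L V q.2.1) ∘L adjoint (V q.1.1 ∘L V q.2.1)).reApplyInnerSelf η := by
      intro q
      rw [reApply_conj, reApply_WW]
      have := abs_re_inner_le_opNorm Y (adjoint (V q.1.1 ∘L V q.2.1) η)
      have h2 := le_abs_self
        (RCLike.re ⟪Y (adjoint (V q.1.1 ∘L V q.2.1) η), adjoint (V q.1.1 ∘L V q.2.1) η⟫)
      linarith
    calc ∑ q ∈ F, ((V q.1.1 ∘L V q.2.1) ∘L Y ∘L adjoint (V q.1.1 ∘L V q.2.1)).reApplyInnerSelf η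
        ≤ ∑ q ∈ F, ‖Y‖ * ((V q.1.1 ∘L V q.2.1) ∘L
            adjoint (V q.1.1 ∘L V q.2.1)).reApplyInnerSelf η :=
          Finset.sum_le_sum (fun q _ => hterm q)
      _ = ‖Y‖ * ∑ q ∈ F, ((V q.1.1 ∘L V q.2.1) ∘L
            adjoint (V q.1.1 ∘L V q.2.1)).reApplyInnerSelf η := by
          rw [Finset.mul_sum]
      _ = ‖Y‖ * (∑ q ∈ F, (V q.1.1 ∘L V q.2.1) ∘L
            adjoint (V q.1.1 ∘L V q.2.1)).reApplyInnerSelf η := by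
          rw [hsplit]
      _ ≤ ‖Y‖ * ‖η‖ ^ 2 :=
          mul_le_mul_of_nonneg_left (sum_WW_bound hV n₁ n₂ F η) (norm_nonneg Y)
  obtain ⟨Y₁, Y₂, Y₃, Y₄, c₁, c₂, c₃, c₄, p₁, p₂, p₃, p₄, hXeq⟩ := decomp_four X
  have hsplitX : (fun q : Σ _ : {l : K.Λ // K.deg l = n₁}, {l : K.Λ // K.deg l = n₂} =>
      V q.1.1 (V q.2.1 (X (adjoint (V q.2.1) (adjoint (V q.1.1) ξ)))))
      = (fun q : Σ _ : {l : K.Λ // K.deg l = n₁}, {l : K.Λ // K.deg l = n₂} =>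
        c₁ • (((V q.1.1 ∘L V q.2.1) ∘L Y₁ ∘L adjoint (V q.1.1 ∘L V q.2.1)) ξ)
        + c₂ • (((V q.1.1 ∘L V q.2.1) ∘L Y₂ ∘L adjoint (V q.1.1 ∘L V q.2.1)) ξ)
        + c₃ • (((V q.1.1 ∘L V q.2.1) ∘L Y₃ ∘L adjoint (V q.1.1 ∘L V q.2.1)) ξ)
        + c₄ • (((V q.1.1 ∘L V q.2.1) ∘L Y₄ ∘L adjoint (V q.1.1 ∘L V q.2.1)) ξ)) := by
    funext q
    rw [hform X q, hXeq]
    simp only [ContinuousLinearMap.add_comp, ContinuousLinearMap.comp_add,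
      ContinuousLinearMap.smul_comp, ContinuousLinearMap.comp_smul,
      ContinuousLinearMap.add_apply, ContinuousLinearMap.smul_apply]
  rw [hsplitX]
  exact ((((main Y₁ p₁).const_smul c₁).add ((main Y₂ p₂).const_smul c₂)).add
    ((main Y₃ p₃).const_smul c₃)).add ((main Y₄ p₄).const_smul c₄)

private lemma comp_step (hV : IsLambdaContraction K V) (X : H →L[ℂ] H)
    (n₁ n₂ : Fin r → ℕ)
    (hs1 : ∀ ξ : H, HasSum (fun l : {l : K.Λ // K.deg l = n₁} =>
      V l.1 (X (adjoint (V l.1) ξ))) (X ξ))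
    (hs2 : ∀ ξ : H, HasSum (fun l : {l : K.Λ // K.deg l = n₂} =>
      V l.1 (X (adjoint (V l.1) ξ))) (X ξ))
    (ξ : H) :
    HasSum (fun l : {l : K.Λ // K.deg l = n₁ + n₂} =>
      V l.1 (X (adjoint (V l.1) ξ))) (X ξ) := by
  classical
  obtain ⟨h1, h2, h3, h4, h5⟩ := id hV
  set f : (Σ _ : {l : K.Λ // K.deg l = n₁}, {l : K.Λ // K.deg l = n₂}) → H :=
    fun q => V q.1.1 (V q.2.1 (X (adjoint (V q.2.1) (adjoint (V q.1.1) ξ)))) with hf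
  have hfib : ∀ μ : {l : K.Λ // K.deg l = n₁},
      HasSum (fun ν : {l : K.Λ // K.deg l = n₂} => f ⟨μ, ν⟩)
        (V μ.1 (X (adjoint (V μ.1) ξ))) :=
    fun μ => (V μ.1).hasSum (hs2 (adjoint (V μ.1) ξ))
  have hsum : HasSum f (X ξ) :=
    HasSum.sigma_of_hasSum (hs1 ξ) hfib (summable_sigma_family hV X n₁ n₂ ξ)
  set ι : {l : K.Λ // K.deg l = n₁ + n₂} →
      (Σ _ : {l : K.Λ // K.deg l = n₁}, {l : K.Λ // K.deg l = n₂}) :=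
    fun l => ⟨⟨((K.factorisation l.1 n₁ n₂ l.2).exists).choose.1,
        ((K.factorisation l.1 n₁ n₂ l.2).exists).choose_spec.1⟩,
      ⟨((K.factorisation l.1 n₁ n₂ l.2).exists).choose.2,
        ((K.factorisation l.1 n₁ n₂ l.2).exists).choose_spec.2.1⟩⟩ with hι
  have hιcomp : ∀ l : {l : K.Λ // K.deg l = n₁ + n₂},
      K.comp (ι l).1.1 (ι l).2.1 = l.1 ∧ K.src (ι l).1.1 = K.tgt (ι l).2.1 := by
    intro l
    exact ⟨((K.factorisation l.1 n₁ n₂ l.2).exists).choose_spec.2.2.2,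
      ((K.factorisation l.1 n₁ n₂ l.2).exists).choose_spec.2.2.1⟩
  have hinj : Function.Injective ι := by
    intro l l' h
    have e1 : (ι l).1.1 = (ι l').1.1 := by rw [h]
    have e2 : (ι l).2.1 = (ι l').2.1 := by rw [h]
    apply Subtype.ext
    rw [← (hιcomp l).1, ← (hιcomp l').1, e1, e2]
  have hrange : ∀ q, q ∉ Set.range ι → f q = 0 := by
    intro q hq
    by_cases hcomp : K.src q.1.1 = K.tgt q.2.1
    · exfalso
      apply hq
      have hdc : K.deg (K.comp q.1.1 q.2.1) = n₁ + n₂ := by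
        rw [K.deg_comp _ _ hcomp, q.1.2, q.2.2]
      refine ⟨⟨K.comp q.1.1 q.2.1, hdc⟩, ?_⟩
      have hspec := hιcomp ⟨K.comp q.1.1 q.2.1, hdc⟩
      obtain ⟨ea, eb⟩ := pair_injective n₁ n₂
        (ι ⟨K.comp q.1.1 q.2.1, hdc⟩).1.2 (ι ⟨K.comp q.1.1 q.2.1, hdc⟩).2.2
        q.1.2 q.2.2 hspec.2 hcomp hspec.1
      obtain ⟨qa, qb⟩ := q
      apply Sigma.ext
      · exact Subtype.ext ea
      · exact heq_of_eq (Subtype.ext eb)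
    · have h0 : V q.1.1 ∘L V q.2.1 = 0 := h1 _ _ hcomp
      show V q.1.1 (V q.2.1 (X (adjoint (V q.2.1) (adjoint (V q.1.1) ξ)))) = 0
      have : V q.1.1 (V q.2.1 (X (adjoint (V q.2.1) (adjoint (V q.1.1) ξ))))
          = (V q.1.1 ∘L V q.2.1) (X (adjoint (V q.2.1) (adjoint (V q.1.1) ξ))) := rfl
      rw [this, h0]
      rfl
  have hκ := (Function.Injective.hasSum_iff hinj hrange).2 hsum
  have hcongr : (f ∘ ι) = fun l : {l : K.Λ // K.deg l = n₁ + n₂} =>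
      V l.1 (X (adjoint (V l.1) ξ)) := by
    funext l
    obtain ⟨hcl, hsl⟩ := hιcomp l
    have hVc : V (ι l).1.1 ∘L V (ι l).2.1 = V l.1 := by
      rw [h2 _ _ hsl, hcl]
    show V (ι l).1.1 (V (ι l).2.1 (X (adjoint (V (ι l).2.1) (adjoint (V (ι l).1.1) ξ))))
      = V l.1 (X (adjoint (V l.1) ξ))
    have hadj : adjoint (V (ι l).2.1) ∘L adjoint (V (ι l).1.1) = adjoint (V l.1) := by
      rw [← ContinuousLinearMap.adjoint_comp, hVc]
    calc V (ι l).1.1 (V (ι l).2.1 (X (adjoint (V (ι l).2.1) (adjoint (V (ι l).1.1) ξ))))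
        = (V (ι l).1.1 ∘L V (ι l).2.1)
            (X ((adjoint (V (ι l).2.1) ∘L adjoint (V (ι l).1.1)) ξ)) := rfl
      _ = V l.1 (X (adjoint (V l.1) ξ)) := by rw [hVc, hadj]
  rw [hcongr] at hκ
  exact hκ

private lemma vertex_step (hV : IsLambdaContraction K V) (X : H →L[ℂ] H) (j : Fin r)
    (hXj : ∀ ξ : H, HasSum (fun l : {l : K.Λ // K.deg l = Pi.single j 1} =>
      V l.1 (X (adjoint (V l.1) ξ))) (X ξ)) (ξ : H) :
    HasSum (fun a : {a : K.Λ // K.IsVertex a} => V a.1 (X (V a.1 ξ))) (X ξ) := by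
  classical
  obtain ⟨h1, h2, h3, h4, h5⟩ := id hV
  have htgtv : ∀ l : K.Λ, K.IsVertex (K.tgt l) := fun l => K.deg_tgt l
  set tmap : {l : K.Λ // K.deg l = Pi.single j 1} → {a : K.Λ // K.IsVertex a} :=
    fun l => ⟨K.tgt l.1, htgtv l.1⟩ with htmap
  have hstep : ∀ a : {a : K.Λ // K.IsVertex a}, HasSum
      (fun l : {l : K.Λ // K.deg l = Pi.single j 1} =>
        if K.tgt l.1 = a.1 then V l.1 (X (adjoint (V l.1) ξ)) else 0)
      (V a.1 (X (V a.1 ξ))) := by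
    intro a
    have hmap := (V a.1).hasSum (hXj (V a.1 ξ))
    have heq : (fun l : {l : K.Λ // K.deg l = Pi.single j 1} =>
        V a.1 (V l.1 (X (adjoint (V l.1) (V a.1 ξ)))))
        = (fun l : {l : K.Λ // K.deg l = Pi.single j 1} =>
          if K.tgt l.1 = a.1 then V l.1 (X (adjoint (V l.1) ξ)) else 0) := by
      funext l
      by_cases h : K.tgt l.1 = a.1
      · rw [if_pos h]
        have hcmp : V a.1 ∘L V l.1 = V l.1 := by
          rw [h2 a.1 l.1 (by rw [K.src_eq_self a.1 a.2, h])]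
          have : K.comp a.1 l.1 = K.comp (K.tgt l.1) l.1 := by rw [h]
          rw [this, K.tgt_comp_self]
        have hadj : adjoint (V l.1) ∘L V a.1 = adjoint (V l.1) := by
          calc adjoint (V l.1) ∘L V a.1
              = adjoint (V l.1) ∘L adjoint (V a.1) := by rw [(h4 a.1 a.2).1.adjoint_eq]
            _ = adjoint (V a.1 ∘L V l.1) := (ContinuousLinearMap.adjoint_comp _ _).symm
            _ = adjoint (V l.1) := by rw [hcmp]
        calc V a.1 (V l.1 (X (adjoint (V l.1) (V a.1 ξ))))
            = (V a.1 ∘L V l.1) (X ((adjoint (V l.1) ∘L V a.1) ξ)) := rfl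
          _ = V l.1 (X (adjoint (V l.1) ξ)) := by rw [hcmp, hadj]
      · rw [if_neg h]
        have h0 : V a.1 ∘L V l.1 = 0 := by
          refine h1 a.1 l.1 ?_
          rw [K.src_eq_self a.1 a.2]
          exact fun hh => h hh.symm
        calc V a.1 (V l.1 (X (adjoint (V l.1) (V a.1 ξ))))
            = (V a.1 ∘L V l.1) (X (adjoint (V l.1) (V a.1 ξ))) := rfl
          _ = 0 := by rw [h0]; rfl
    rw [heq] at hmap
    exact hmap
  have hfib : ∀ a : {a : K.Λ // K.IsVertex a},
      HasSum (fun c : {l : {l : K.Λ // K.deg l = Pi.single j 1} // tmap l = a} =>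
        V c.1.1 (X (adjoint (V c.1.1) ξ))) (V a.1 (X (V a.1 ξ))) := by
    intro a
    have hinj : Function.Injective
        (Subtype.val : {l : {l : K.Λ // K.deg l = Pi.single j 1} // tmap l = a} →
          {l : K.Λ // K.deg l = Pi.single j 1}) := Subtype.val_injective
    have hvan : ∀ l : {l : K.Λ // K.deg l = Pi.single j 1},
        l ∉ Set.range (Subtype.val :
          {l : {l : K.Λ // K.deg l = Pi.single j 1} // tmap l = a} →
            {l : K.Λ // K.deg l = Pi.single j 1}) →
        (if K.tgt l.1 = a.1 then V l.1 (X (adjoint (V l.1) ξ)) else 0) = 0 := by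
      intro l hl
      rw [if_neg]
      intro hc
      exact hl ⟨⟨l, Subtype.ext hc⟩, rfl⟩
    have hres := (Function.Injective.hasSum_iff hinj hvan).2 (hstep a)
    have heq2 : ((fun l : {l : K.Λ // K.deg l = Pi.single j 1} =>
        if K.tgt l.1 = a.1 then V l.1 (X (adjoint (V l.1) ξ)) else 0) ∘
        (Subtype.val : {l : {l : K.Λ // K.deg l = Pi.single j 1} // tmap l = a} → _))
        = fun c : {l : {l : K.Λ // K.deg l = Pi.single j 1} // tmap l = a} =>
          V c.1.1 (X (adjoint (V c.1.1) ξ)) := by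
      funext c
      have : K.tgt c.1.1 = a.1 := congrArg Subtype.val c.2
      simp only [Function.comp_apply, this, if_pos]
    rw [heq2] at hres
    exact hres
  have hall := (Equiv.hasSum_iff (Equiv.sigmaFiberEquiv tmap)).2 (hXj ξ)
  exact HasSum.sigma hall hfib

end AuxGraph

/-- If `X` is fixed by `σ_V(e_j)` for every `j`, then it is fixed by
`σ_V(n)` for all `n ∈ ℕ^r`, and `Σ_{a∈Λ⁰} V_a X V_a = X` strongly. -/
theorem fixed_points_of_generators
    {r : ℕ} (K : KGraph r) (hcof : K.Cofinal)
    {H : Type u} [NormedAddCommGroup H] [InnerProductSpace ℂ H] [CompleteSpace H]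
    (V : K.Λ → H →L[ℂ] H) (hV : IsLambdaContraction K V)
    (X : H →L[ℂ] H)
    (hX : ∀ j : Fin r, ∀ ξ : H,
      HasSum (fun l : {l : K.Λ // K.deg l = Pi.single j 1} =>
        V l.1 (X (adjoint (V l.1) ξ))) (X ξ)) :
    (∀ (n : Fin r → ℕ) (ξ : H),
      HasSum (fun l : {l : K.Λ // K.deg l = n} => V l.1 (X (adjoint (V l.1) ξ))) (X ξ)) ∧
    (∀ ξ : H,
      HasSum (fun a : {a : K.Λ // K.IsVertex a} => V a.1 (X (V a.1 ξ))) (X ξ)) := by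
  classical
  obtain ⟨h1, h2, h3, h4, h5⟩ := id hV
  rcases Nat.eq_zero_or_pos r with hr | hr
  · -- rank zero: the graph is empty and `H` is trivial
    have hempty : IsEmpty {a : K.Λ // K.IsVertex a} := by
      constructor
      rintro ⟨a, ha⟩
      obtain ⟨l, hl, -⟩ := hcof a ha
      apply hl
      subst hr
      funext i
      exact absurd i.2 (Nat.not_lt_zero _)
    have hzero : ∀ ξ : H, ξ = 0 := by
      intro ξ
      have hsum := h5 ξ
      have hfz : (fun a : {a : K.Λ // K.IsVertex a} => V a.1 ξ) = fun _ => (0 : H) :=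
        funext fun a => (hempty.false a).elim
      rw [hfz] at hsum
      exact hsum.unique hasSum_zero
    constructor
    · intro n ξ
      have h1' : X ξ = 0 := hzero _
      have h2' : (fun l : {l : K.Λ // K.deg l = n} => V l.1 (X (adjoint (V l.1) ξ)))
          = fun _ => (0 : H) := funext fun _ => hzero _
      rw [h1', h2']
      exact hasSum_zero
    · intro ξ
      have h1' : X ξ = 0 := hzero _
      have h2' : (fun a : {a : K.Λ // K.IsVertex a} => V a.1 (X (V a.1 ξ)))
          = fun _ => (0 : H) := funext fun _ => hzero _
      rw [h1', h2']
      exact hasSum_zero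
  · -- positive rank
    have j0 : Fin r := ⟨0, hr⟩
    have hvertex : ∀ ξ : H,
        HasSum (fun a : {a : K.Λ // K.IsVertex a} => V a.1 (X (V a.1 ξ))) (X ξ) :=
      vertex_step hV X j0 (hX j0)
    have hP0 : ∀ ξ : H, HasSum (fun l : {l : K.Λ // K.deg l = 0} =>
        V l.1 (X (adjoint (V l.1) ξ))) (X ξ) := by
      intro ξ
      have hv := hvertex ξ
      have heq : (fun a : {a : K.Λ // K.IsVertex a} => V a.1 (X (V a.1 ξ)))
          = (fun a : {a : K.Λ // K.IsVertex a} => V a.1 (X (adjoint (V a.1) ξ))) := by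
        funext a
        rw [(h4 a.1 a.2).1.adjoint_eq]
      rw [heq] at hv
      exact hv
    have hmain : ∀ (N : ℕ) (n : Fin r → ℕ), (∑ k, n k) = N → ∀ ξ : H,
        HasSum (fun l : {l : K.Λ // K.deg l = n} => V l.1 (X (adjoint (V l.1) ξ))) (X ξ) := by
      intro N
      induction N with
      | zero =>
        intro n hn ξ
        have hn0 : n = 0 := by
          funext k
          exact Finset.sum_eq_zero_iff.1 hn k (Finset.mem_univ k)
        subst hn0
        exact hP0 ξ
      | succ N ih =>
        intro n hn ξ
        have hex : ∃ k, n k ≠ 0 := by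
          by_contra hc
          push_neg at hc
          rw [Finset.sum_eq_zero (fun k _ => hc k)] at hn
          exact Nat.succ_ne_zero N hn.symm
        obtain ⟨k, hk⟩ := hex
        set m : Fin r → ℕ := Function.update n k (n k - 1) with hm
        have hmsum : (∑ i, m i) = N := by
          have h₁ : ∑ i, m i = (n k - 1) + ∑ i ∈ Finset.univ.erase k, n i := by
            rw [hm, ← Finset.add_sum_erase _ _ (Finset.mem_univ k),
              Function.update_self]
            congr 1
            refine Finset.sum_congr rfl (fun i hi => ?_)
            rw [Function.update_of_ne (Finset.ne_of_mem_erase hi)]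
          have h₂ : ∑ i, n i = n k + ∑ i ∈ Finset.univ.erase k, n i :=
            (Finset.add_sum_erase _ _ (Finset.mem_univ k)).symm
          rw [h₂] at hn
          omega
        have hnm : n = Pi.single k 1 + m := by
          funext i
          by_cases hik : i = k
          · subst hik
            simp only [Pi.add_apply, Pi.single_eq_same, hm, Function.update_self]
            omega
          · simp only [Pi.add_apply, Pi.single_eq_of_ne hik, hm,
              Function.update_of_ne hik, zero_add]
        have hstep := comp_step hV X (Pi.single k 1) m (hX k) (ih m hmsum)
        rw [hnm]
        exact hstep ξ
    exact ⟨fun n ξ => hmain (∑ k, n k) n rfl ξ, hvertex⟩
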